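/- Let R be a unital ring, let I be a two-sided ideal of R such that every element of I is a finite sum of products xy with x, y ∈ I, let D : I → I be an additive map satisfying D(xy) = D(x)y + xD(y) for all x, y ∈ I, and let z ∈ R be a central idempotent (z² = z and z commutes with every element of R). Then D(zx) = zD(x) for every x ∈ I. -/

import Mathlib

/-- If `I` is a two-sided ideal of a unital ring `R` in which every element is a finite
sum of products of pairs of elements of `I`, `D : I → I` is a derivation, and `z ∈ R`
is a central idempotent, then `D(zx) = z·D(x)` for all `x ∈ I`. -/
theorem derivation_commutes_with_central_idempotent
    {R : Type*} [Ring R] (I : TwoSidedIdeal R)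
    (h_sq : ∀ a ∈ I, ∃ (m : ℕ) (x y : Fin m → R),
      (∀ i, x i ∈ I) ∧ (∀ i, y i ∈ I) ∧ a = ∑ i, x i * y i)
    (D : R → R)
    (hD_maps : ∀ x ∈ I, D x ∈ I)
    (hD_add : ∀ x ∈ I, ∀ y ∈ I, D (x + y) = D x + D y)
    (hD_leibniz : ∀ x ∈ I, ∀ y ∈ I, D (x * y) = D x * y + x * D y)
    (z : R) (hz_idem : z * z = z) (hz_central : ∀ r : R, z * r = r * z) :
    ∀ x ∈ I, D (z * x) = z * D x := by
  have hzI : ∀ u ∈ I, z * u ∈ I := fun u hu => I.mul_mem_left z u hu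
  have hD0 : D 0 = 0 := by
    have h := hD_add 0 I.zero_mem 0 I.zero_mem
    rw [add_zero] at h
    exact add_eq_left.mp h.symm
  -- Lemma A : δ(u) * v = u * δ(v)
  have lemA : ∀ u ∈ I, ∀ v ∈ I,
      (D (z * u) - z * D u) * v = u * (D (z * v) - z * D v) := by
    intro u hu v hv
    have h1 : D (z * u * v) = D (z * u) * v + z * u * D v :=
      hD_leibniz _ (hzI u hu) _ hv
    have h2 : D (u * (z * v)) = D u * (z * v) + u * D (z * v) :=
      hD_leibniz _ hu _ (hzI v hv)
    have key : z * u * v = u * (z * v) := by rw [hz_central u, mul_assoc]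
    rw [key] at h1
    rw [h1] at h2
    have e1 : D u * (z * v) = z * D u * v := by
      rw [← mul_assoc, ← hz_central (D u)]
    rw [e1] at h2
    have e2 : z * u * D v = u * (z * D v) := by rw [hz_central u, mul_assoc]
    rw [e2] at h2
    -- h2 : D (z*u)*v + u*(z*D v) = z*D u*v + u*D(z*v)
    calc (D (z * u) - z * D u) * v
        = D (z * u) * v - z * D u * v := sub_mul _ _ _
      _ = u * D (z * v) - u * (z * D v) := by
          rw [sub_eq_sub_iff_add_eq_add, h2]; exact add_comm _ _
      _ = u * (D (z * v) - z * D v) := (mul_sub _ _ _).symm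
  -- Lemma B : δ(u) * v = 0
  have lemB : ∀ u ∈ I, ∀ v ∈ I, (D (z * u) - z * D u) * v = 0 := by
    intro u hu v hv
    have h1 := lemA u hu v hv
    have h2 := lemA (z * u) (hzI u hu) v hv
    rw [← mul_assoc, hz_idem] at h2
    -- h2 : (D (z*u) - z*D (z*u)) * v = z*u * (D (z*v) - z*D v)
    have hA : z * ((D (z * u) - z * D u) * v) = z * u * (D (z * v) - z * D v) := by
      rw [h1, ← mul_assoc]
    have key : (D (z * u) - (z * z) * D u) * v
        = z * ((D (z * u) - z * D u) * v) + (D (z * u) - z * D (z * u)) * v := by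
      noncomm_ring
    rw [hz_idem, hA, h2] at key
    -- key : δ(u)*v = z*u*δ(v) + z*u*δ(v)
    have h0 : z * u * (D (z * v) - z * D v) = 0 := by
      have e1 : z * ((D (z * u) - z * D u) * v)
          = z * u * (D (z * v) - z * D v) + z * u * (D (z * v) - z * D v) := by
        rw [key]
        have e : z * (z * u * (D (z * v) - z * D v) + z * u * (D (z * v) - z * D v))
            = (z * z) * u * (D (z * v) - z * D v)
              + (z * z) * u * (D (z * v) - z * D v) := by noncomm_ring
        rw [e, hz_idem]
      rw [hA] at e1
      exact left_eq_add.mp e1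
    rw [key, h0, add_zero]
  -- additivity over finite sums
  have hD_sum : ∀ (m : ℕ) (f : Fin m → R), (∀ i, f i ∈ I) →
      D (∑ i, f i) = ∑ i, D (f i) := by
    intro m
    induction m with
    | zero => intro f _; simpa using hD0
    | succ n ih =>
      intro f hf
      have hmem : (∑ i : Fin n, f i.succ) ∈ I :=
        sum_mem (fun i _ => hf i.succ)
      rw [Fin.sum_univ_succ, Fin.sum_univ_succ,
        hD_add _ (hf 0) _ hmem, ih _ (fun i => hf i.succ)]
  -- main argument
  intro x hx
  obtain ⟨m, a, b, ha, hb, rfl⟩ := h_sq x hx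
  have hzsum : z * ∑ i, a i * b i = ∑ i, z * a i * b i := by
    rw [Finset.mul_sum]; simp [mul_assoc]
  rw [hzsum, hD_sum m _ (fun i => I.mul_mem_right _ _ (hzI _ (ha i))),
    hD_sum m _ (fun i => I.mul_mem_right _ _ (ha i)), Finset.mul_sum]
  apply Finset.sum_congr rfl
  intro i _
  rw [hD_leibniz _ (hzI _ (ha i)) _ (hb i), hD_leibniz _ (ha i) _ (hb i)]
  have h4 : D (z * a i) * b i = z * D (a i) * b i := by
    have h3 := lemB (a i) (ha i) (b i) (hb i)
    rw [sub_mul] at h3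
    exact sub_eq_zero.mp h3
  rw [h4, mul_add, ← mul_assoc, ← mul_assoc]
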